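/- Let A (n×n) and B (m×m) be integer matrices that are shift equivalent over Z via (R₀, S) with lag ℓ. Setting t = 1 in the PSE equation yields the identity [[1, 0],[S, 1]] · [[1, -R₀],[0, 1]] · [[I−A, 0],[0, 1]] · [[W, R₀],[-S, I−B]] = [[1, 0],[0, I−B]] over Z, where W = I + A + ⋯ + A^(ℓ−1); moreover det([[W, R₀],[-S, I−B]]) = 1. -/

import Mathlib

open Matrix Polynomial Finset

private lemma pse_key {R : Type*} [CommRing R] {n m : ℕ} (ℓ : ℕ)
    (x : Matrix (Fin n) (Fin n) R) (y : Matrix (Fin m) (Fin m) R)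
    (r : Matrix (Fin n) (Fin m) R) (s : Matrix (Fin m) (Fin n) R)
    (h1 : x ^ ℓ = r * s) (h2 : y ^ ℓ = s * r)
    (h3 : x * r = r * y) (h4 : s * x = y * s) :
    fromBlocks 1 0 s 1 * fromBlocks 1 (-r) 0 1 * fromBlocks (1 - x) 0 0 1 *
      fromBlocks (∑ i ∈ range ℓ, x ^ i) r (-s) (1 - y) =
    fromBlocks 1 0 0 (1 - y) := by
  have hg : (1 - x) * ∑ i ∈ range ℓ, x ^ i = 1 - x ^ ℓ := by
    have h := mul_geom_sum x ℓ
    rw [← neg_sub x 1, Matrix.neg_mul, h, neg_sub]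
  simp only [Matrix.fromBlocks_multiply]
  rw [Matrix.fromBlocks_inj]
  refine ⟨?_, ?_, ?_, ?_⟩
  all_goals simp only [Matrix.mul_one, Matrix.one_mul, Matrix.zero_mul, Matrix.mul_zero,
    add_zero, zero_add, Matrix.neg_mul, Matrix.mul_neg, neg_neg]
  · rw [hg, h1, sub_add_cancel]
  · simp only [Matrix.sub_mul, Matrix.mul_sub, Matrix.one_mul, Matrix.mul_one, h3]
    abel
  · rw [Matrix.mul_assoc, hg]
    simp only [Matrix.mul_sub, Matrix.add_mul, Matrix.neg_mul, Matrix.one_mul, Matrix.mul_one,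
      h1, Matrix.mul_assoc]
    abel
  · simp only [Matrix.mul_sub, Matrix.sub_mul, Matrix.add_mul, Matrix.neg_mul, Matrix.one_mul,
      Matrix.mul_one, h3, Matrix.mul_assoc]
    abel

private lemma pse_det {R : Type*} [CommRing R] {n m : ℕ} (ℓ : ℕ)
    (x : Matrix (Fin n) (Fin n) R) (y : Matrix (Fin m) (Fin m) R)
    (r : Matrix (Fin n) (Fin m) R) (s : Matrix (Fin m) (Fin n) R)
    (h1 : x ^ ℓ = r * s) (h2 : y ^ ℓ = s * r)
    (h3 : x * r = r * y) (h4 : s * x = y * s) :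
    (1 - x).det * (fromBlocks (∑ i ∈ range ℓ, x ^ i) r (-s) (1 - y)).det = (1 - y).det := by
  have h := congrArg Matrix.det (pse_key ℓ x y r s h1 h2 h3 h4)
  simpa [Matrix.det_mul, Matrix.det_fromBlocks_zero₂₁, Matrix.det_fromBlocks_zero₁₂] using h

private lemma pse_map_smul {k k' : ℕ} (c : ℤ) (p : ℤ[X]) (M : Matrix (Fin k) (Fin k') ℤ) :
    ((p • M.map (Polynomial.C : ℤ → ℤ[X])).map (Polynomial.eval c)) = (p.eval c) • M := by
  ext i j
  simp [Matrix.map_apply, Matrix.smul_apply, smul_eq_mul]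

private lemma pse_map_pow {k : ℕ} (M : Matrix (Fin k) (Fin k) ℤ) (j : ℕ) :
    (M ^ j).map (Polynomial.C : ℤ → ℤ[X]) = (M.map Polynomial.C) ^ j := by
  simpa [RingHom.mapMatrix_apply] using
    map_pow ((Polynomial.C : ℤ →+* ℤ[X]).mapMatrix) M j

private lemma pse_map_blocks (n m ℓ : ℕ) (c : ℤ)
    (A : Matrix (Fin n) (Fin n) ℤ) (B : Matrix (Fin m) (Fin m) ℤ)
    (R₀ : Matrix (Fin n) (Fin m) ℤ) (S : Matrix (Fin m) (Fin n) ℤ) :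
    (fromBlocks (∑ i ∈ range ℓ, ((X : ℤ[X]) • A.map Polynomial.C) ^ i)
        (((X : ℤ[X]) ^ ℓ) • R₀.map Polynomial.C) (-(S.map Polynomial.C))
        (1 - (X : ℤ[X]) • B.map Polynomial.C)).map (Polynomial.eval c) =
      fromBlocks (∑ i ∈ range ℓ, (c • A) ^ i) ((c ^ ℓ) • R₀) (-S) (1 - c • B) := by
  rw [Matrix.fromBlocks_map]
  have e1 : (∑ i ∈ range ℓ, ((X : ℤ[X]) • A.map Polynomial.C) ^ i).map (Polynomial.eval c)
      = ∑ i ∈ range ℓ, (c • A) ^ i := by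
    rw [← Polynomial.coe_evalRingHom, ← RingHom.mapMatrix_apply, map_sum]
    refine Finset.sum_congr rfl fun i _ => ?_
    rw [map_pow, RingHom.mapMatrix_apply, Polynomial.coe_evalRingHom]
    rw [pse_map_smul c X A, Polynomial.eval_X]
  have e2 : (((X : ℤ[X]) ^ ℓ) • R₀.map Polynomial.C).map (Polynomial.eval c)
      = (c ^ ℓ) • R₀ := by
    rw [pse_map_smul]; simp
  have e3 : (-(S.map Polynomial.C)).map (Polynomial.eval c) = -S := by
    ext i j; simp [Matrix.map_apply]
  have e4 : ((1 : Matrix (Fin m) (Fin m) ℤ[X]) - (X : ℤ[X]) • B.map Polynomial.C).map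
      (Polynomial.eval c) = 1 - c • B := by
    rw [← Polynomial.coe_evalRingHom, ← RingHom.mapMatrix_apply, map_sub, _root_.map_one,
      RingHom.mapMatrix_apply, Polynomial.coe_evalRingHom, pse_map_smul c X B, Polynomial.eval_X]
  rw [e1, e2, e3, e4]

private lemma pse_map_one_sub {k : ℕ} (c : ℤ) (M : Matrix (Fin k) (Fin k) ℤ) :
    ((1 : Matrix (Fin k) (Fin k) ℤ[X]) - (X : ℤ[X]) • M.map Polynomial.C).map
      (Polynomial.eval c) = 1 - c • M := by
  rw [← Polynomial.coe_evalRingHom, ← RingHom.mapMatrix_apply, map_sub, _root_.map_one,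
    RingHom.mapMatrix_apply, Polynomial.coe_evalRingHom, pse_map_smul c X M, Polynomial.eval_X]

/-- setting `t = 1` in the PSE equation gives a stabilized integer
matrix equivalence between `I−A` and `I−B`, with the intertwining matrix having
determinant 1. -/
theorem pse_at_one (n m ℓ : ℕ) (hℓ : 0 < ℓ)
    (A : Matrix (Fin n) (Fin n) ℤ) (B : Matrix (Fin m) (Fin m) ℤ)
    (R₀ : Matrix (Fin n) (Fin m) ℤ) (S : Matrix (Fin m) (Fin n) ℤ)
    (h1 : A ^ ℓ = R₀ * S) (h2 : B ^ ℓ = S * R₀)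
    (h3 : A * R₀ = R₀ * B) (h4 : S * A = B * S) :
    let W : Matrix (Fin n) (Fin n) ℤ := ∑ i ∈ Finset.range ℓ, A ^ i
    Matrix.fromBlocks 1 0 S 1 * Matrix.fromBlocks 1 (-R₀) 0 1 *
        Matrix.fromBlocks (1 - A) 0 0 1 *
        Matrix.fromBlocks W R₀ (-S) (1 - B) =
      Matrix.fromBlocks 1 0 0 (1 - B) ∧
    (Matrix.fromBlocks W R₀ (-S) (1 - B)).det = 1 := by
  intro W
  refine ⟨pse_key ℓ A B R₀ S h1 h2 h3 h4, ?_⟩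
  classical
  set A' : Matrix (Fin n) (Fin n) ℤ[X] := A.map Polynomial.C with hA'
  set B' : Matrix (Fin m) (Fin m) ℤ[X] := B.map Polynomial.C with hB'
  set R' : Matrix (Fin n) (Fin m) ℤ[X] := R₀.map Polynomial.C with hR'
  set S' : Matrix (Fin m) (Fin n) ℤ[X] := S.map Polynomial.C with hS'
  set x : Matrix (Fin n) (Fin n) ℤ[X] := (X : ℤ[X]) • A' with hx
  set y : Matrix (Fin m) (Fin m) ℤ[X] := (X : ℤ[X]) • B' with hy
  set r : Matrix (Fin n) (Fin m) ℤ[X] := ((X : ℤ[X]) ^ ℓ) • R' with hr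
  set r₂ : Matrix (Fin m) (Fin n) ℤ[X] := ((X : ℤ[X]) ^ ℓ) • S' with hr2
  have hAR : A' * R' = R' * B' := by
    rw [hA', hR', hB', ← Matrix.map_mul, ← Matrix.map_mul, h3]
  have hSA : S' * A' = B' * S' := by
    rw [hA', hS', hB', ← Matrix.map_mul, ← Matrix.map_mul, h4]
  have hApow : A' ^ ℓ = R' * S' := by rw [hA', ← pse_map_pow, h1, Matrix.map_mul]
  have hBpow : B' ^ ℓ = S' * R' := by rw [hB', ← pse_map_pow, h2, Matrix.map_mul]
  have k1 : x ^ ℓ = r * S' := by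
    rw [hx, hr, _root_.smul_pow, Matrix.smul_mul, hApow]
  have k2 : y ^ ℓ = S' * r := by
    rw [hy, hr, _root_.smul_pow, Matrix.mul_smul, hBpow]
  have k3 : x * r = r * y := by
    rw [hx, hr, hy]
    simp only [Matrix.smul_mul, Matrix.mul_smul, smul_smul, hAR]
    rw [mul_comm]
  have k4 : S' * x = y * S' := by
    rw [hx, hy, Matrix.mul_smul, Matrix.smul_mul, hSA]
  have l1 : y ^ ℓ = r₂ * R' := by rw [hy, hr2, _root_.smul_pow, Matrix.smul_mul, hBpow]
  have l2 : x ^ ℓ = R' * r₂ := by rw [hx, hr2, _root_.smul_pow, Matrix.mul_smul, hApow]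
  have l3 : y * r₂ = r₂ * x := by
    rw [hx, hr2, hy]
    simp only [Matrix.smul_mul, Matrix.mul_smul, smul_smul, hSA]
    rw [mul_comm]
  have l4 : R' * y = x * R' := by rw [hx, hy, Matrix.mul_smul, Matrix.smul_mul, hAR]
  have hu := pse_det ℓ x y r S' k1 k2 k3 k4
  have hv := pse_det ℓ y x r₂ R' l1 l2 l3 l4
  set u : ℤ[X] := (fromBlocks (∑ i ∈ range ℓ, x ^ i) r (-S') (1 - y)).det with hu'
  set v : ℤ[X] := (fromBlocks (∑ i ∈ range ℓ, y ^ i) r₂ (-R') (1 - x)).det with hv'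
  -- evaluation of u at any integer c
  have hUeval : ∀ c : ℤ, Polynomial.eval c u =
      (fromBlocks (∑ i ∈ range ℓ, (c • A) ^ i) ((c ^ ℓ) • R₀) (-S) (1 - c • B)).det := by
    intro c
    rw [hu', ← Polynomial.coe_evalRingHom, RingHom.map_det, RingHom.mapMatrix_apply, Polynomial.coe_evalRingHom,
      hx, hy, hr, hA', hB', hR', hS', pse_map_blocks]
  -- (1 - x).det is nonzero
  have hd1 : Polynomial.eval 0 (1 - x).det = 1 := by
    rw [← Polynomial.coe_evalRingHom, RingHom.map_det, RingHom.mapMatrix_apply, Polynomial.coe_evalRingHom,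
      hx, hA', pse_map_one_sub]
    simp
  have hd1ne : (1 - x).det ≠ 0 := by
    intro h0
    rw [h0] at hd1
    simp at hd1
  -- u * v = 1
  have huv : u * v = 1 := by
    have hcalc : (1 - x).det * (u * v) = (1 - x).det * 1 := by
      rw [mul_one, ← mul_assoc, hu, hv]
    exact mul_left_cancel₀ hd1ne hcalc
  obtain ⟨a, _, hCa⟩ := Polynomial.isUnit_iff.mp (IsUnit.of_mul_eq_one (a := u) v huv)
  -- evaluate at 0 : a = 1
  have hzsum : ∑ i ∈ range ℓ, ((0 : ℤ) • A) ^ i = (1 : Matrix (Fin n) (Fin n) ℤ) := by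
    obtain ⟨k, rfl⟩ : ∃ k, ℓ = k + 1 := ⟨ℓ - 1, (Nat.succ_pred_eq_of_pos hℓ).symm⟩
    rw [Finset.sum_range_succ']
    simp [zero_pow]
  have ha1 : a = 1 := by
    have h0 := hUeval 0
    rw [← hCa, Polynomial.eval_C] at h0
    rw [h0, hzsum, zero_pow hℓ.ne', zero_smul, zero_smul, sub_zero,
      Matrix.det_fromBlocks_zero₁₂]
    simp
  -- evaluate at 1
  have h1u := hUeval 1
  rw [← hCa, Polynomial.eval_C, ha1] at h1u
  have : (fromBlocks (∑ i ∈ range ℓ, ((1 : ℤ) • A) ^ i) (((1 : ℤ) ^ ℓ) • R₀) (-S)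
      (1 - (1 : ℤ) • B)).det = 1 := h1u.symm
  simpa [one_smul, one_pow, W] using this
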